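/- Let v ≥ 2, k ≥ 0 and d ≥ 0 be integers, and let Λ be a finite subgroup of (ℝ/ℤ)^{d+1} which is non-pyramidal and has δ-polynomial 1 + t^{k+1} + t^{2(k+1)} + ⋯ + t^{(v−1)(k+1)}. Then d ≤ 4(v−1)(k+1) − 2. -/

import Mathlib

open scoped BigOperators

local instance : Fact ((0:ℝ) < 1) := ⟨one_pos⟩

noncomputable def fracR (x : AddCircle (1:ℝ)) : ℝ :=
  ((AddCircle.equivIco 1 0) x : ℝ)

noncomputable def ht {ι : Type*} [Fintype ι] (x : ι → AddCircle (1:ℝ)) : ℝ :=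
  ∑ i, fracR (x i)

/-- `Λ` has δ-polynomial `1 + t^step + t^(2*step) + ⋯ + t^((v-1)*step)` :
the height map is a bijection from `Λ` onto `{j*step : 0 ≤ j ≤ v-1}`. -/
def HasDeltaPoly {ι : Type*} [Fintype ι] (v step : ℕ)
    (Λ : Set (ι → AddCircle (1:ℝ))) : Prop :=
  Set.BijOn ht Λ {y : ℝ | ∃ j : ℕ, j < v ∧ y = (j : ℝ) * (step : ℝ)}

def NonPyramidal {ι : Type*} [Fintype ι] (Λ : Set (ι → AddCircle (1:ℝ))) : Prop :=
  ∀ i : ι, ∃ x ∈ Λ, x i ≠ 0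
lemma fracR_coe (a : ℝ) : fracR ↑a = Int.fract a := by
  simp [fracR, AddCircle.coe_equivIco_mk_apply]

lemma fracR_eq_zero_iff (x : AddCircle (1:ℝ)) : fracR x = 0 ↔ x = 0 := by
  induction x using QuotientAddGroup.induction_on with
  | H a =>
    rw [fracR_coe]
    constructor
    · intro h
      have : a = (⌊a⌋ : ℝ) := by
        have := Int.fract_add_floor a
        linarith
      rw [this]
      rw [AddCircle.coe_eq_zero_iff]
      exact ⟨⌊a⌋, by simp⟩
    · intro h
      rw [AddCircle.coe_eq_zero_iff] at h
      obtain ⟨n, hn⟩ := h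
      rw [← hn]
      simp

lemma fracR_add_neg (x : AddCircle (1:ℝ)) :
    fracR x + fracR (-x) = if x = 0 then 0 else 1 := by
  by_cases hx : x = 0
  · simp [hx, fracR_eq_zero_iff 0 |>.mpr rfl]
  · rw [if_neg hx]
    induction x using QuotientAddGroup.induction_on with
    | H a =>
      have h0 : Int.fract a ≠ 0 := by
        intro h; exact hx ((fracR_eq_zero_iff _).mp (by rw [fracR_coe]; exact h))
      have : (-(↑a : AddCircle (1:ℝ))) = ↑(-a) := rfl
      rw [this, fracR_coe, fracR_coe, Int.fract_neg h0]
      ring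

lemma fracR_nonneg (x : AddCircle (1:ℝ)) : 0 ≤ fracR x := by
  induction x using QuotientAddGroup.induction_on with
  | H a => rw [fracR_coe]; exact Int.fract_nonneg a

theorem stmt_2 (v k d : ℕ) (hv : 2 ≤ v)
    (Λ : AddSubgroup (Fin (d+1) → AddCircle (1:ℝ)))
    (hfin : (Λ : Set (Fin (d+1) → AddCircle (1:ℝ))).Finite)
    (hnp : NonPyramidal (Λ : Set (Fin (d+1) → AddCircle (1:ℝ))))
    (hΛ : HasDeltaPoly v (k+1) (Λ : Set (Fin (d+1) → AddCircle (1:ℝ)))) :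
    d ≤ 4 * (v-1) * (k+1) - 2 := by
  classical
  set c : ℝ := ((k:ℝ) + 1) with hc
  have hcpos : 0 < c := by positivity
  set S : Finset (Fin (d+1) → AddCircle (1:ℝ)) := hfin.toFinset with hS
  have hmemS : ∀ x, x ∈ S ↔ x ∈ Λ := by intro x; simp [hS]
  -- the target finset
  set T : Finset ℝ := (Finset.range v).image (fun j : ℕ => (j : ℝ) * c) with hT
  have hmemT : ∀ y : ℝ, y ∈ T ↔ ∃ j : ℕ, j < v ∧ y = (j:ℝ) * c := by
    intro y
    simp only [hT, Finset.mem_image, Finset.mem_range]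
    constructor
    · rintro ⟨j, hj, rfl⟩; exact ⟨j, hj, rfl⟩
    · rintro ⟨j, hj, rfl⟩; exact ⟨j, hj, rfl⟩
  have hstep : ((k+1 : ℕ) : ℝ) = c := by push_cast [hc]; ring
  -- heights sum
  have hsum : ∑ x ∈ S, ht x = ∑ y ∈ T, y := by
    refine Finset.sum_bij (fun a _ => ht a) ?_ ?_ ?_ ?_
    · intro a ha
      rw [hmemT]
      obtain ⟨j, hj, hja⟩ := hΛ.mapsTo ((hmemS a).mp ha)
      exact ⟨j, hj, by show ht a = _; rw [hja, hstep]⟩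
    · intro a₁ ha₁ a₂ ha₂ h
      exact hΛ.injOn ((hmemS a₁).mp ha₁) ((hmemS a₂).mp ha₂) h
    · intro y hy
      rw [hmemT] at hy
      obtain ⟨j, hj, rfl⟩ := hy
      obtain ⟨a, ha, hay⟩ := hΛ.surjOn (show ((j:ℝ)*c) ∈ _ from ⟨j, hj, by rw [hstep]⟩)
      exact ⟨a, (hmemS a).mpr ha, hay⟩
    · intro a ha; rfl
  have hTsum : (∑ y ∈ T, y) * 2 = c * (v * (v-1) : ℕ) := by
    rw [hT, Finset.sum_image]
    · have := Finset.sum_range_id_mul_two v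
      have hcast : ((∑ i ∈ Finset.range v, i : ℕ) : ℝ) = ∑ i ∈ Finset.range v, (i:ℝ) := by
        push_cast; rfl
      calc (∑ j ∈ Finset.range v, (j:ℝ) * c) * 2
          = c * ((∑ j ∈ Finset.range v, (j:ℝ)) * 2) := by rw [← Finset.sum_mul]; ring
        _ = c * (((∑ i ∈ Finset.range v, i) * 2 : ℕ) : ℝ) := by push_cast; ring
        _ = c * (v * (v-1) : ℕ) := by rw [this]
    · intro a _ b _ h
      have : (a:ℝ) = b := by
        field_simp at h
        linarith [h]
      exact_mod_cast this
  -- cardinality of S is v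
  have hcard : S.card = v := by
    have : S.card = T.card := by
      refine Finset.card_bij (fun a _ => ht a) ?_ ?_ ?_
      · intro a ha
        rw [hmemT]
        obtain ⟨j, hj, hja⟩ := hΛ.mapsTo ((hmemS a).mp ha)
        exact ⟨j, hj, by show ht a = _; rw [hja, hstep]⟩
      · intro a₁ ha₁ a₂ ha₂ h
        exact hΛ.injOn ((hmemS a₁).mp ha₁) ((hmemS a₂).mp ha₂) h
      · intro y hy
        rw [hmemT] at hy
        obtain ⟨j, hj, rfl⟩ := hy
        obtain ⟨a, ha, hay⟩ := hΛ.surjOn (show ((j:ℝ)*c) ∈ _ from ⟨j, hj, by rw [hstep]⟩)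
        exact ⟨a, (hmemS a).mpr ha, hay⟩
    rw [this, hT, Finset.card_image_of_injective _ ?_, Finset.card_range]
    intro a b h
    have : (a:ℝ) * c = (b:ℝ) * c := h
    have := mul_right_cancel₀ (ne_of_gt hcpos) this
    exact_mod_cast this
  -- per-coordinate estimate
  have hcoord : ∀ i : Fin (d+1), (v : ℝ) ≤ 4 * ∑ x ∈ S, fracR (x i) := by
    intro i
    obtain ⟨N, hN⟩ : ∃ N : Finset (Fin (d+1) → AddCircle (1:ℝ)),
        N = S.filter (fun x => x i ≠ 0) := ⟨_, rfl⟩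
    -- pairing with negation
    have hnegsum : ∑ x ∈ S, fracR (x i) = ∑ x ∈ S, fracR (-(x i)) := by
      refine Finset.sum_nbij' (fun x => -x) (fun x => -x) ?_ ?_ ?_ ?_ ?_
      · intro a ha; rw [hmemS]; exact neg_mem ((hmemS a).mp ha)
      · intro a ha; rw [hmemS]; exact neg_mem ((hmemS a).mp ha)
      · intro a _; simp
      · intro a _; simp
      · intro a _; simp
    have hdouble : 2 * ∑ x ∈ S, fracR (x i) = (N.card : ℝ) := by
      have key : 2 * ∑ x ∈ S, fracR (x i)
          = ∑ x ∈ S, (fracR (x i) + fracR (-(x i))) := by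
        rw [Finset.sum_add_distrib, two_mul, hnegsum]
      have key2 : ∑ x ∈ S, (fracR (x i) + fracR (-(x i)))
          = ∑ x ∈ S, (if x i = 0 then (0:ℝ) else 1) :=
        Finset.sum_congr rfl (fun x _ => fracR_add_neg (x i))
      rw [key, key2, Finset.sum_ite, Finset.sum_const, Finset.sum_const]
      rw [hN]
      simp
    -- kernel vs complement
    obtain ⟨w, hwΛ, hwi⟩ := hnp i
    have hinj : (S.filter (fun x => x i = 0)).card ≤ N.card := by
      refine Finset.card_le_card_of_injOn (fun x => x + w) ?_ ?_
      · intro x hx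
        rw [Finset.mem_coe, Finset.mem_filter] at hx
        rw [hN, Finset.mem_coe, Finset.mem_filter]
        refine ⟨(hmemS _).mpr (add_mem ((hmemS x).mp hx.1) hwΛ), ?_⟩
        show (x + w) i ≠ 0
        have : (x + w) i = x i + w i := rfl
        rw [this, hx.2, zero_add]
        exact hwi
      · intro a _ b _ h
        exact add_right_cancel h
    have hsplit : (S.filter (fun x => x i = 0)).card + N.card = v := by
      rw [hN, Finset.card_filter_add_card_filter_not, hcard]
    have hNv : (v : ℝ) ≤ 2 * (N.card : ℝ) := by
      have h' : v ≤ 2 * N.card := by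
        obtain ⟨M, hM⟩ : ∃ M, M = (S.filter (fun x => x i = 0)).card := ⟨_, rfl⟩
        rw [← hM] at hsplit hinj
        calc v = M + N.card := hsplit.symm
          _ ≤ N.card + N.card := Nat.add_le_add_right hinj _
          _ = 2 * N.card := (Nat.two_mul _).symm
      exact_mod_cast h'
    calc (v:ℝ) ≤ 2 * (N.card : ℝ) := hNv
      _ = 2 * (2 * ∑ x ∈ S, fracR (x i)) := by rw [hdouble]
      _ = 4 * ∑ x ∈ S, fracR (x i) := by ring
  -- sum over coordinates
  have hswap : ∑ x ∈ S, ht x = ∑ i : Fin (d+1), ∑ x ∈ S, fracR (x i) := by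
    unfold ht
    exact Finset.sum_comm
  have hmain : ((d:ℝ)+1) * v ≤ 2 * c * (v * (v-1) : ℕ) := by
    calc ((d:ℝ)+1) * v = ∑ _i : Fin (d+1), (v:ℝ) := by
          rw [Finset.sum_const, Finset.card_univ, Fintype.card_fin, nsmul_eq_mul]
          push_cast; ring
      _ ≤ ∑ i : Fin (d+1), 4 * ∑ x ∈ S, fracR (x i) :=
          Finset.sum_le_sum (fun i _ => hcoord i)
      _ = 4 * ∑ x ∈ S, ht x := by rw [hswap, Finset.mul_sum]
      _ = 2 * ((∑ y ∈ T, y) * 2) := by rw [hsum]; ring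
      _ = 2 * c * (v * (v-1) : ℕ) := by rw [hTsum]; ring
  -- conclude
  have hvm : ((v * (v-1) : ℕ) : ℝ) = (v:ℝ) * ((v-1:ℕ):ℝ) := by push_cast; ring
  have hfinal : ((d:ℝ)+1) ≤ 2 * c * ((v-1:ℕ):ℝ) := by
    have hvpos : (0:ℝ) < v := by positivity
    rw [hvm] at hmain
    have : ((d:ℝ)+1) * v ≤ (2 * c * ((v-1:ℕ):ℝ)) * v := by linarith [hmain]
    exact le_of_mul_le_mul_right this hvpos
  have hnat : d + 1 ≤ 2 * (k+1) * (v-1) := by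
    have : ((d+1 : ℕ):ℝ) ≤ ((2 * (k+1) * (v-1) : ℕ):ℝ) := by
      push_cast
      rw [hc] at hfinal
      linarith
    exact_mod_cast this
  have hm1 : 1 ≤ (v-1) * (k+1) := Nat.mul_pos (by omega) (by omega)
  have h4 : 4 * (v-1) * (k+1) = 4 * ((v-1)*(k+1)) := by ring
  have h2 : 2 * (k+1) * (v-1) = 2 * ((v-1)*(k+1)) := by ring
  rw [h4]
  rw [h2] at hnat
  omega
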